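/- arXiv:1603.08147 — 3 statements merged into one kernel-verified Lean document; each statement's English description precedes it below -/
import Mathlib

section
/- Let τ be any Hausdorff topology on the λ-polycyclic monoid P_λ (λ ≥ 2 a cardinal) for which (P_λ, τ) is a topological inverse semigroup. Then for every finite subset A of the free monoid M_λ, the set U_A(0) = {a⁻¹b : a, b ∈ M_λ \ A} ∪ {0} is open in (P_λ, τ); indeed U_A(0) = P_λ \ (φ⁻¹(E_A) ∪ ψ⁻¹(E_A)), where φ(x) = x·x⁻¹, ψ(x) = x⁻¹·x, and E_A = {a⁻¹a : a ∈ A} is a finite set of nonzero idempotents. -/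
universe u v

/-- An inverse semigroup: every element has a unique (von Neumann) inverse. -/
class InverseSemigroup (S : Type u) extends Semigroup S, Inv S where
  mul_inv_mul : ∀ a : S, a * a⁻¹ * a = a
  inv_mul_inv : ∀ a : S, a⁻¹ * a * a⁻¹ = a⁻¹
  inv_unique : ∀ a b : S, a * b * a = a → b * a * b = b → b = a⁻¹

/-- The λ-polycyclic monoid over the index type `ι` (of cardinality λ), realized as
`(M_λ × M_λ) ∪ {0}` where `M_λ = FreeMonoid ι` is the free monoid on λ generators;
the pair `(a, b)` encodes the element `a⁻¹b` and `none` is the zero. -/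
abbrev PolyMon (ι : Type u) : Type u := Option (FreeMonoid ι × FreeMonoid ι)

/-- The nonzero element `a⁻¹b` of the polycyclic monoid. -/
def polyEl {ι : Type u} (a b : FreeMonoid ι) : PolyMon ι := some (a, b)

instance {ι : Type u} : Zero (PolyMon ι) := ⟨none⟩

instance {ι : Type u} : One (PolyMon ι) := ⟨polyEl 1 1⟩

open Classical in
/-- Multiplication of the polycyclic monoid:
`a⁻¹b · c⁻¹d = (c₁a)⁻¹d` if `c = c₁b`; `= a⁻¹(b₁d)` if `b = b₁c`; `= 0` otherwise,
and `0` is a two-sided zero. -/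
noncomputable def polyMul {ι : Type u} (x y : PolyMon ι) : PolyMon ι :=
  Option.bind x fun p => Option.bind y fun q =>
    if h : ∃ c₁ : FreeMonoid ι, q.1 = c₁ * p.2 then some (Classical.choose h * p.1, q.2)
    else if h' : ∃ b₁ : FreeMonoid ι, p.2 = b₁ * q.1 then some (p.1, Classical.choose h' * q.2)
    else none

noncomputable instance {ι : Type u} : Mul (PolyMon ι) := ⟨polyMul⟩

/-- Inversion of the polycyclic monoid: `(a⁻¹b)⁻¹ = b⁻¹a` and `0⁻¹ = 0`. -/
instance {ι : Type u} : Inv (PolyMon ι) :=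
  ⟨fun x => Option.map (fun p => (p.2, p.1)) x⟩

/-- The basic neighbourhood `U_A(0) = {a⁻¹b : a, b ∈ M_λ \ A} ∪ {0}` of zero. -/
def U0 {ι : Type u} (A : Set (FreeMonoid ι)) : Set (PolyMon ι) :=
  {x | x = 0 ∨ ∃ a b : FreeMonoid ι, a ∉ A ∧ b ∉ A ∧ x = polyEl a b}

lemma poly_inv {ι : Type u} (a b : FreeMonoid ι) : (polyEl a b)⁻¹ = polyEl b a := rfl

lemma poly_phi {ι : Type u} (a b : FreeMonoid ι) :
    polyEl a b * (polyEl a b)⁻¹ = polyEl a a := by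
  show polyMul (some (a, b)) (some (b, a)) = some (a, a)
  have h : ∃ c₁ : FreeMonoid ι, b = c₁ * b := ⟨1, (one_mul b).symm⟩
  have hc : Classical.choose h = 1 := by
    have hs := Classical.choose_spec h
    have : Classical.choose h * b = 1 * b := by rw [one_mul]; exact hs.symm
    exact mul_right_cancel this
  simp only [polyMul, Option.bind]
  rw [dif_pos h, hc, one_mul]

lemma poly_psi {ι : Type u} (a b : FreeMonoid ι) :
    (polyEl a b)⁻¹ * polyEl a b = polyEl b b := by
  rw [poly_inv]
  exact poly_phi b a

lemma zero_phi {ι : Type u} : (0 : PolyMon ι) * (0 : PolyMon ι)⁻¹ = 0 := rfl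

/-- For λ ≥ 2 and any Hausdorff inverse semigroup topology `τ` on the λ-polycyclic monoid
`P_λ`, the set `U_A(0)` is `τ`-open for every finite `A ⊆ M_λ`; indeed
`U_A(0) = P_λ \ (φ⁻¹(E_A) ∪ ψ⁻¹(E_A))` where `φ(x) = x·x⁻¹`, `ψ(x) = x⁻¹·x` and
`E_A = {a⁻¹a : a ∈ A}`. -/
theorem statement_14 {ι : Type u} [Nontrivial ι] [TopologicalSpace (PolyMon ι)]
    [T2Space (PolyMon ι)] [ContinuousMul (PolyMon ι)] [ContinuousInv (PolyMon ι)]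
    (A : Set (FreeMonoid ι)) (hA : A.Finite) :
    IsOpen (U0 A) ∧
    U0 A = Set.univ \
      ((fun x : PolyMon ι => x * x⁻¹) ⁻¹' {x | ∃ a ∈ A, x = polyEl a a} ∪
       (fun x : PolyMon ι => x⁻¹ * x) ⁻¹' {x | ∃ a ∈ A, x = polyEl a a}) := by
  have hE : {x : PolyMon ι | ∃ a ∈ A, x = polyEl a a} = (fun a => polyEl a a) '' A := by
    ext x; simp [Set.mem_image, eq_comm]
  have hEfin : ({x : PolyMon ι | ∃ a ∈ A, x = polyEl a a}).Finite := by
    rw [hE]; exact hA.image _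
  have hEclosed : IsClosed {x : PolyMon ι | ∃ a ∈ A, x = polyEl a a} := hEfin.isClosed
  have hphi : Continuous (fun x : PolyMon ι => x * x⁻¹) :=
    continuous_id.mul continuous_inv
  have hpsi : Continuous (fun x : PolyMon ι => x⁻¹ * x) :=
    continuous_inv.mul continuous_id
  have heq : U0 A = Set.univ \
      ((fun x : PolyMon ι => x * x⁻¹) ⁻¹' {x | ∃ a ∈ A, x = polyEl a a} ∪
       (fun x : PolyMon ι => x⁻¹ * x) ⁻¹' {x | ∃ a ∈ A, x = polyEl a a}) := by
    ext x
    match x with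
    | none =>
      constructor
      · intro _
        refine ⟨trivial, ?_⟩
        rintro (⟨a, _, ha⟩ | ⟨a, _, ha⟩) <;> exact absurd (show (none : PolyMon ι) = some (a, a) from ha) (by simp)
      · intro _; exact Or.inl rfl
    | some (a, b) =>
      have h1 : (some (a, b) : PolyMon ι) * (some (a, b) : PolyMon ι)⁻¹ = polyEl a a :=
        poly_phi a b
      have h2 : (some (a, b) : PolyMon ι)⁻¹ * (some (a, b) : PolyMon ι) = polyEl b b :=
        poly_psi a b
      constructor
      · rintro (h | ⟨a', b', ha', hb', hx⟩)
        · exact absurd (show (some (a, b) : PolyMon ι) = none from h) (by simp)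
        · obtain ⟨rfl, rfl⟩ : a = a' ∧ b = b' := by
            injection hx with h; exact ⟨congrArg Prod.fst h, congrArg Prod.snd h⟩
          refine ⟨trivial, ?_⟩
          rintro (⟨c, hc, hca⟩ | ⟨c, hc, hcb⟩)
          · have hca' : some (a, b) * (some (a, b))⁻¹ = polyEl c c := hca
            rw [h1] at hca'
            injection hca' with h'
            have : a = c := congrArg Prod.fst h'
            exact ha' (this ▸ hc)
          · have hcb' : (some (a, b))⁻¹ * some (a, b) = polyEl c c := hcb
            rw [h2] at hcb'
            injection hcb' with h'
            have : b = c := congrArg Prod.fst h'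
            exact hb' (this ▸ hc)
      · rintro ⟨-, hn⟩
        refine Or.inr ⟨a, b, ?_, ?_, rfl⟩
        · intro ha; exact hn (Or.inl ⟨a, ha, h1⟩)
        · intro hb; exact hn (Or.inr ⟨b, hb, h2⟩)
  refine ⟨?_, heq⟩
  rw [heq, ← Set.compl_eq_univ_diff]
  exact (IsClosed.union (hEclosed.preimage hphi) (hEclosed.preimage hpsi)).isOpen_compl
end

section
/- For any infinite cardinal λ, the topology τ_mi is the coarsest inverse semigroup topology on the λ-polycyclic monoid P_λ: for every Hausdorff topology τ on P_λ making (P_λ, τ) a topological inverse semigroup, τ_mi ⊆ τ. In particular, (P_λ, τ_mi) is a minimal topological inverse semigroup (no Hausdorff inverse semigroup topology on P_λ is strictly coarser than τ_mi). -/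
universe u v

/-- The topology `τ_mi` on the polycyclic monoid: all nonzero elements are isolated and
the sets `U_A(0)`, for `A` a finite subset of the free monoid, form a base at `0`. -/
def tauMi (ι : Type u) : TopologicalSpace (PolyMon ι) :=
  TopologicalSpace.generateFrom
    ({s | ∃ x : PolyMon ι, x ≠ 0 ∧ s = {x}} ∪
     {s | ∃ A : Set (FreeMonoid ι), A.Finite ∧ s = U0 A})

set_option linter.unusedSectionVars false
open Topology

namespace Poly
variable {ι : Type u}

theorem zero_mul' (y : PolyMon ι) : (0 : PolyMon ι) * y = 0 := rfl

theorem mul_zero' (x : PolyMon ι) : x * (0 : PolyMon ι) = 0 := by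
  cases x <;> rfl

theorem inv_zero' : ((0 : PolyMon ι))⁻¹ = 0 := rfl

theorem inv_polyEl (a b : FreeMonoid ι) : (polyEl a b)⁻¹ = polyEl b a := rfl

theorem polyEl_ne_zero (a b : FreeMonoid ι) : polyEl a b ≠ 0 :=
  fun h => by cases h

theorem one_def : (1 : PolyMon ι) = polyEl 1 1 := rfl

theorem one_ne_zero' : (1 : PolyMon ι) ≠ 0 := polyEl_ne_zero 1 1

theorem polyEl_inj {a b c d : FreeMonoid ι} (h : polyEl a b = polyEl c d) : a = c ∧ b = d := by
  simpa [polyEl, Prod.ext_iff] using h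

open Classical in
theorem mul_def (a b c d : FreeMonoid ι) :
    polyEl a b * polyEl c d =
      (if h : ∃ c₁ : FreeMonoid ι, c = c₁ * b then some (Classical.choose h * a, d)
       else if h' : ∃ b₁ : FreeMonoid ι, b = b₁ * c then some (a, Classical.choose h' * d)
       else none) := rfl

theorem mulA (a b c₁ d : FreeMonoid ι) :
    polyEl a b * polyEl (c₁ * b) d = polyEl (c₁ * a) d := by
  rw [mul_def]
  have h : ∃ e : FreeMonoid ι, c₁ * b = e * b := ⟨c₁, rfl⟩
  rw [dif_pos h]
  have := Classical.choose_spec h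
  have he : Classical.choose h = c₁ := mul_right_cancel this.symm
  rw [he]; rfl

theorem mulB (a b₁ c d : FreeMonoid ι) :
    polyEl a (b₁ * c) * polyEl c d = polyEl a (b₁ * d) := by
  rw [mul_def]
  by_cases h : ∃ e : FreeMonoid ι, c = e * (b₁ * c)
  · obtain ⟨e, he⟩ := h
    have hl := congrArg FreeMonoid.length he
    rw [FreeMonoid.length_mul, FreeMonoid.length_mul] at hl
    have he0 : FreeMonoid.length e = 0 := by omega
    have hb0 : FreeMonoid.length b₁ = 0 := by omega
    have hb1 : b₁ = 1 := FreeMonoid.length_eq_zero.mp hb0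
    have h : ∃ e : FreeMonoid ι, c = e * (b₁ * c) := ⟨e, he⟩
    rw [dif_pos h]
    have hspec := Classical.choose_spec h
    have hc1 : Classical.choose h = 1 := by
      have hl2 := congrArg FreeMonoid.length hspec
      rw [FreeMonoid.length_mul, FreeMonoid.length_mul] at hl2
      refine FreeMonoid.length_eq_zero.mp ?_
      omega
    rw [hc1, hb1]; simp [polyEl]
  · rw [dif_neg h]
    have h' : ∃ e : FreeMonoid ι, b₁ * c = e * c := ⟨b₁, rfl⟩
    rw [dif_pos h']
    have he : Classical.choose h' = b₁ := mul_right_cancel (Classical.choose_spec h').symm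
    rw [he]; rfl

theorem mul0 {b c : FreeMonoid ι} (a d : FreeMonoid ι)
    (h1 : ¬∃ c₁ : FreeMonoid ι, c = c₁ * b) (h2 : ¬∃ b₁ : FreeMonoid ι, b = b₁ * c) :
    polyEl a b * polyEl c d = 0 := by
  rw [mul_def, dif_neg h1, dif_neg h2]; rfl

theorem mul_cases (a b c d : FreeMonoid ι) :
    (∃ c₁, c = c₁ * b ∧ polyEl a b * polyEl c d = polyEl (c₁ * a) d) ∨
    (∃ b₁, b = b₁ * c ∧ polyEl a b * polyEl c d = polyEl a (b₁ * d)) ∨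
    polyEl a b * polyEl c d = 0 := by
  by_cases h : ∃ c₁ : FreeMonoid ι, c = c₁ * b
  · obtain ⟨c₁, hc⟩ := h
    exact Or.inl ⟨c₁, hc, by rw [hc, mulA]⟩
  · by_cases h' : ∃ b₁ : FreeMonoid ι, b = b₁ * c
    · obtain ⟨b₁, hb⟩ := h'
      exact Or.inr (Or.inl ⟨b₁, hb, by rw [hb, mulB]⟩)
    · exact Or.inr (Or.inr (mul0 a d h h'))

theorem mul_inv_self (c d : FreeMonoid ι) : polyEl c d * (polyEl c d)⁻¹ = polyEl c c := by
  rw [inv_polyEl]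
  have := mulA c d 1 c
  simpa using this

theorem inv_self_mul (c d : FreeMonoid ι) : (polyEl c d)⁻¹ * polyEl c d = polyEl d d := by
  rw [inv_polyEl]
  have := mulA d c 1 d
  simpa using this

/-- last-letter lemma -/
theorem suffix_letter_unique {c c₁ c₂ : FreeMonoid ι} {s t : ι}
    (h1 : c = c₁ * FreeMonoid.of s) (h2 : c = c₂ * FreeMonoid.of t) : s = t := by
  have h := h1.symm.trans h2
  have h' : FreeMonoid.toList c₁ ++ [s] = FreeMonoid.toList c₂ ++ [t] := congrArg FreeMonoid.toList h
  have hlen : (FreeMonoid.toList c₁).length = (FreeMonoid.toList c₂).length := by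
    have := congrArg List.length h'
    simp at this; omega
  have := (List.append_inj h' hlen).2
  simpa using this

/-- φ_s on idempotents: nonzero only if c = 1 or c ends with s. -/
theorem phi_ne_zero {s : ι} {c : FreeMonoid ι}
    (h : (polyEl 1 (FreeMonoid.of s) * polyEl c c) * polyEl (FreeMonoid.of s) 1 ≠ 0) :
    c = 1 ∨ ∃ c₁, c = c₁ * FreeMonoid.of s := by
  by_contra hc
  have hc1 : c ≠ 1 := fun h => hc (Or.inl h)
  have hc2 : ¬∃ c₁, c = c₁ * FreeMonoid.of s := fun h => hc (Or.inr h)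
  have hz : polyEl 1 (FreeMonoid.of s) * polyEl c c = 0 := by
    refine mul0 _ _ hc2 ?_
    rintro ⟨f, hf⟩
    have hl := congrArg FreeMonoid.length hf
    rw [FreeMonoid.length_mul, FreeMonoid.length_of] at hl
    have hcl : FreeMonoid.length c ≠ 0 := fun h0 => hc1 (FreeMonoid.length_eq_zero.mp h0)
    have hf0 : FreeMonoid.length f = 0 := by omega
    have : f = 1 := FreeMonoid.length_eq_zero.mp hf0
    rw [this, one_mul] at hf
    exact hc2 ⟨1, by rw [hf, one_mul]⟩
  rw [hz, zero_mul'] at h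
  exact h rfl

theorem phi_one (s : ι) :
    (polyEl (1:FreeMonoid ι) (FreeMonoid.of s) * polyEl 1 1) * polyEl (FreeMonoid.of s) 1 = 1 := by
  have h1 : polyEl (1:FreeMonoid ι) (FreeMonoid.of s) * polyEl 1 1 = polyEl 1 (FreeMonoid.of s) := by
    have := mulB (1:FreeMonoid ι) (FreeMonoid.of s) 1 1
    simpa using this
  rw [h1]
  have := mulA (1:FreeMonoid ι) (FreeMonoid.of s) 1 1
  simpa [one_def] using this

section Topo
variable [t : TopologicalSpace (PolyMon ι)] [T2Space (PolyMon ι)]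
  [ContinuousMul (PolyMon ι)] [ContinuousInv (PolyMon ι)]

theorem cont_aux1 (k l : PolyMon ι) : Continuous fun y : PolyMon ι => k * (y * y⁻¹) * l :=
  (continuous_const.mul (continuous_id.mul continuous_inv)).mul continuous_const

theorem cont_aux2 (k l : PolyMon ι) : Continuous fun y : PolyMon ι => k * (y⁻¹ * y) * l :=
  (continuous_const.mul (continuous_inv.mul continuous_id)).mul continuous_const

theorem sep (x y : PolyMon ι) (h : x ≠ y) : ∃ U : Set (PolyMon ι), IsOpen U ∧ x ∈ U ∧ y ∉ U :=
  t1Space_iff_exists_open.mp inferInstance h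

theorem isolated_one [Infinite ι] : IsOpen {(1 : PolyMon ι)} := by
  obtain ⟨i, j, hij⟩ := exists_pair_ne ι
  obtain ⟨V₀, hV₀o, h1V₀, h0V₀⟩ := sep (1 : PolyMon ι) 0 one_ne_zero'
  set Θ : ι → PolyMon ι → PolyMon ι :=
    fun s y => polyEl 1 (FreeMonoid.of s) * (y * y⁻¹) * polyEl (FreeMonoid.of s) 1 with hΘ
  set Λ : ι → PolyMon ι → PolyMon ι :=
    fun s y => polyEl 1 (FreeMonoid.of s) * (y⁻¹ * y) * polyEl (FreeMonoid.of s) 1 with hΛ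
  have hΘc : ∀ s, Continuous (Θ s) := fun s => cont_aux1 _ _
  have hΛc : ∀ s, Continuous (Λ s) := fun s => cont_aux2 _ _
  have keyΘ : ∀ (s : ι) (u v : FreeMonoid ι),
      Θ s (polyEl u v) = polyEl 1 (FreeMonoid.of s) * polyEl u u * polyEl (FreeMonoid.of s) 1 := by
    intro s u v
    simp only [hΘ]
    rw [mul_inv_self]
  have keyΛ : ∀ (s : ι) (u v : FreeMonoid ι),
      Λ s (polyEl u v) = polyEl 1 (FreeMonoid.of s) * polyEl v v * polyEl (FreeMonoid.of s) 1 := by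
    intro s u v
    simp only [hΛ]
    rw [inv_self_mul]
  set V : Set (PolyMon ι) :=
    V₀ ∩ (Θ i ⁻¹' V₀) ∩ (Θ j ⁻¹' V₀) ∩ (Λ i ⁻¹' V₀) ∩ (Λ j ⁻¹' V₀) with hV
  have hVo : IsOpen V :=
    ((((hV₀o.inter ((hΘc i).isOpen_preimage _ hV₀o)).inter
      ((hΘc j).isOpen_preimage _ hV₀o)).inter
      ((hΛc i).isOpen_preimage _ hV₀o)).inter ((hΛc j).isOpen_preimage _ hV₀o))
  have honeΘ : ∀ s : ι, Θ s 1 = 1 := by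
    intro s
    rw [one_def, keyΘ]
    exact phi_one s
  have honeΛ : ∀ s : ι, Λ s 1 = 1 := by
    intro s
    rw [one_def, keyΛ]
    exact phi_one s
  have h1V : (1 : PolyMon ι) ∈ V := by
    refine ⟨⟨⟨⟨h1V₀, ?_⟩, ?_⟩, ?_⟩, ?_⟩ <;>
      simp only [Set.mem_preimage, honeΘ, honeΛ] <;> exact h1V₀
  have hsub : V ⊆ {(1 : PolyMon ι)} := by
    rintro y ⟨⟨⟨⟨hy0, hyi⟩, hyj⟩, hli⟩, hlj⟩
    match y with
    | none => exact absurd hy0 h0V₀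
    | some (c, d) =>
      have hyi' : Θ i (polyEl c d) ∈ V₀ := hyi
      have hyj' : Θ j (polyEl c d) ∈ V₀ := hyj
      have hli' : Λ i (polyEl c d) ∈ V₀ := hli
      have hlj' : Λ j (polyEl c d) ∈ V₀ := hlj
      rw [keyΘ] at hyi' hyj'
      rw [keyΛ] at hli' hlj'
      have hc1 : c = 1 := by
        rcases phi_ne_zero (c := c) (s := i) (fun h0 => h0V₀ (h0 ▸ hyi')) with h | ⟨c₁, hc₁⟩
        · exact h
        rcases phi_ne_zero (c := c) (s := j) (fun h0 => h0V₀ (h0 ▸ hyj')) with h | ⟨c₂, hc₂⟩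
        · exact h
        exact absurd (suffix_letter_unique hc₁ hc₂) hij
      have hd1 : d = 1 := by
        rcases phi_ne_zero (c := d) (s := i) (fun h0 => h0V₀ (h0 ▸ hli')) with h | ⟨c₁, hc₁⟩
        · exact h
        rcases phi_ne_zero (c := d) (s := j) (fun h0 => h0V₀ (h0 ▸ hlj')) with h | ⟨c₂, hc₂⟩
        · exact h
        exact absurd (suffix_letter_unique hc₁ hc₂) hij
      simp [hc1, hd1, one_def, polyEl]
  have hVeq : V = {(1 : PolyMon ι)} := Set.Subset.antisymm hsub (by simpa using h1V)
  rw [← hVeq]; exact hVo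


theorem suffix_finite (a : FreeMonoid ι) : Set.Finite {c : FreeMonoid ι | ∃ w, a = w * c} := by
  apply Set.Finite.of_finite_image (f := FreeMonoid.length)
  · refine Set.Finite.subset (Set.finite_Iic (FreeMonoid.length a)) ?_
    rintro n ⟨c, ⟨w, hw⟩, rfl⟩
    have := congrArg FreeMonoid.length hw
    rw [FreeMonoid.length_mul] at this
    simp only [Set.mem_Iic]
    omega
  · rintro c₁ ⟨w₁, hw₁⟩ c₂ ⟨w₂, hw₂⟩ hlen
    have h' : FreeMonoid.toList w₁ ++ FreeMonoid.toList c₁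
        = FreeMonoid.toList w₂ ++ FreeMonoid.toList c₂ :=
      congrArg FreeMonoid.toList (hw₁.symm.trans hw₂)
    have hl : (FreeMonoid.toList w₁).length = (FreeMonoid.toList w₂).length := by
      have := congrArg List.length h'
      simp only [List.length_append] at this
      have hc : (FreeMonoid.toList c₁).length = (FreeMonoid.toList c₂).length := hlen
      omega
    exact FreeMonoid.toList.injective (List.append_inj h' hl).2

theorem upset_finite (a b : FreeMonoid ι) :
    Set.Finite {y : PolyMon ι | ∃ w c d, y = polyEl c d ∧ a = w * c ∧ b = w * d} := by
  refine Set.Finite.subset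
    (Set.Finite.image2 polyEl (suffix_finite a) (suffix_finite b)) ?_
  rintro y ⟨w, c, d, rfl, hac, hbd⟩
  exact Set.mem_image2_of_mem ⟨w, hac⟩ ⟨w, hbd⟩

theorem mul_one_eq {e f : FreeMonoid ι} (h : f * (e * 1) = 1) : e = 1 ∧ f = 1 := by
  have := congrArg FreeMonoid.length h
  rw [FreeMonoid.length_mul, FreeMonoid.length_mul] at this
  simp only [FreeMonoid.length_one] at this
  exact ⟨FreeMonoid.length_eq_zero.mp (by omega), FreeMonoid.length_eq_zero.mp (by omega)⟩

theorem isolated_nonzero [Infinite ι] (a b : FreeMonoid ι) : IsOpen {polyEl a b} := by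
  set h : PolyMon ι → PolyMon ι := fun y => polyEl 1 a * y * polyEl b 1 with hh
  have hc : Continuous h := by
    show Continuous (fun y : PolyMon ι => polyEl 1 a * y * polyEl b 1)
    exact (continuous_const.mul (@continuous_id (PolyMon ι) _)).mul continuous_const
  set S : Set (PolyMon ι) := {y | ∃ w c d, y = polyEl c d ∧ a = w * c ∧ b = w * d} with hS
  have hSfin : S.Finite := upset_finite a b
  have hpre : h ⁻¹' {(1 : PolyMon ι)} ⊆ S := by
    intro y hy
    rw [Set.mem_preimage, Set.mem_singleton_iff] at hy
    match y with
    | none =>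
      have h0 : h none = 0 := rfl
      rw [h0] at hy
      exact absurd hy.symm one_ne_zero'
    | some (c, d) =>
      have hy' : polyEl 1 a * polyEl c d * polyEl b 1 = 1 := hy
      rcases mul_cases 1 a c d with ⟨e, hce, heq⟩ | ⟨e, hae, heq⟩ | h0
      · rw [heq] at hy'
        rcases mul_cases (e * 1) d b 1 with ⟨f, hbf, heq2⟩ | ⟨g, hdg, heq2⟩ | h0
        · rw [heq2, one_def] at hy'
          have hfe := mul_one_eq (polyEl_inj hy').1
          refine ⟨1, c, d, rfl, ?_, ?_⟩
          · rw [one_mul, hce, hfe.1, one_mul]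
          · rw [one_mul, hbf, hfe.2, one_mul]
        · rw [heq2, one_def] at hy'
          obtain ⟨h1, h2⟩ := polyEl_inj hy'
          rw [mul_one] at h1 h2
          refine ⟨1, c, d, rfl, ?_, ?_⟩
          · rw [one_mul, hce, h1, one_mul]
          · rw [one_mul, hdg, h2, one_mul]
        · rw [h0] at hy'
          exact absurd hy'.symm one_ne_zero'
      · rw [heq] at hy'
        rcases mul_cases 1 (e * d) b 1 with ⟨f, hbf, heq2⟩ | ⟨g, hg, heq2⟩ | h0
        · rw [heq2, one_def] at hy'
          obtain ⟨h1, _⟩ := polyEl_inj hy'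
          rw [mul_one] at h1
          refine ⟨e, c, d, rfl, hae, ?_⟩
          rw [hbf, h1, one_mul]
        · rw [heq2, one_def] at hy'
          obtain ⟨_, h2⟩ := polyEl_inj hy'
          rw [mul_one] at h2
          refine ⟨e, c, d, rfl, hae, ?_⟩
          rw [h2, one_mul] at hg
          exact hg.symm
        · rw [h0] at hy'
          exact absurd hy'.symm one_ne_zero'
      · rw [h0, zero_mul'] at hy'
        exact absurd hy'.symm one_ne_zero'
  have hx : h (polyEl a b) = 1 := by
    have h1 : polyEl (1:FreeMonoid ι) a * polyEl a b = polyEl 1 b := by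
      have := mulA (1:FreeMonoid ι) a 1 b
      simpa using this
    show polyEl 1 a * polyEl a b * polyEl b 1 = 1
    rw [h1]
    have := mulA (1:FreeMonoid ι) b 1 1
    simpa [one_def] using this
  have heq : {polyEl a b} = h ⁻¹' {(1 : PolyMon ι)} \ (S \ {polyEl a b}) := by
    ext y
    simp only [Set.mem_singleton_iff, Set.mem_diff, Set.mem_preimage]
    constructor
    · rintro rfl
      exact ⟨hx, fun hc => hc.2 rfl⟩
    · rintro ⟨h1, h2⟩
      by_contra hne
      exact h2 ⟨hpre h1, hne⟩
  rw [heq]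
  exact (hc.isOpen_preimage _ isolated_one).sdiff
    ((hSfin.subset Set.diff_subset).isClosed)

theorem zero_mem_avoid (u : FreeMonoid ι) :
    ∃ V : Set (PolyMon ι), IsOpen V ∧ (0 : PolyMon ι) ∈ V ∧
      ∀ c d : FreeMonoid ι, polyEl c d ∈ V → c ≠ u ∧ d ≠ u := by
  obtain ⟨V₀, hV₀o, h0V₀, huV₀⟩ := sep (0 : PolyMon ι) (polyEl u u) (Ne.symm (polyEl_ne_zero u u))
  refine ⟨(fun y : PolyMon ι => y * y⁻¹) ⁻¹' V₀ ∩ (fun y : PolyMon ι => y⁻¹ * y) ⁻¹' V₀,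
    ((continuous_id.mul continuous_inv).isOpen_preimage _ hV₀o).inter
      ((continuous_inv.mul continuous_id).isOpen_preimage _ hV₀o), ⟨h0V₀, h0V₀⟩, ?_⟩
  rintro c d ⟨h1, h2⟩
  rw [Set.mem_preimage] at h1 h2
  have h1' : polyEl c c ∈ V₀ := by rw [← mul_inv_self c d]; exact h1
  have h2' : polyEl d d ∈ V₀ := by rw [← inv_self_mul c d]; exact h2
  constructor
  · rintro rfl; exact huV₀ h1'
  · rintro rfl; exact huV₀ h2'

theorem U0_open [Infinite ι] {A : Set (FreeMonoid ι)} (hA : A.Finite) : IsOpen (U0 A) := by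
  choose V hVo hV0 hVp using fun u : FreeMonoid ι => zero_mem_avoid (ι := ι) u
  set W : Set (PolyMon ι) := ⋂ u ∈ A, V u with hW
  have hWo : IsOpen W := hA.isOpen_biInter fun u _ => hVo u
  have h0W : (0 : PolyMon ι) ∈ W := Set.mem_biInter fun u _ => hV0 u
  have hWU : W ⊆ U0 A := by
    intro y hy
    match y with
    | none => exact Or.inl rfl
    | some (c, d) =>
      refine Or.inr ⟨c, d, ?_, ?_, rfl⟩
      · intro hc
        exact (hVp c c d (Set.mem_iInter₂.mp hy c hc)).1 rfl
      · intro hd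
        exact (hVp d c d (Set.mem_iInter₂.mp hy d hd)).2 rfl
  have hU0 : U0 A = W ∪ ⋃ (p : FreeMonoid ι × FreeMonoid ι) (_ : polyEl p.1 p.2 ∈ U0 A),
      {polyEl p.1 p.2} := by
    ext y
    constructor
    · intro hy
      rcases hy with h0 | ⟨a', b', ha, hb, rfl⟩
      · exact Or.inl (h0 ▸ h0W)
      · refine Or.inr ?_
        refine Set.mem_iUnion₂.mpr ⟨(a', b'), ?_, rfl⟩
        exact Or.inr ⟨a', b', ha, hb, rfl⟩
    · intro hy
      rcases hy with hy | hy
      · exact hWU hy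
      · obtain ⟨p, hp, hyp⟩ := Set.mem_iUnion₂.mp hy
        rw [Set.mem_singleton_iff] at hyp
        rw [hyp]; exact hp
  rw [hU0]
  exact hWo.union (isOpen_iUnion fun p => isOpen_iUnion fun _ => isolated_nonzero p.1 p.2)

theorem coarsest_aux [Infinite ι] : ∀ U : Set (PolyMon ι), IsOpen[tauMi ι] U → IsOpen U := by
  intro U hU
  have hle : t ≤ tauMi ι := by
    rw [tauMi]
    refine le_generateFrom ?_
    rintro s (⟨x, hx0, rfl⟩ | ⟨A, hA, rfl⟩)
    · match x with
      | none => exact absurd rfl hx0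
      | some (a, b) => exact isolated_nonzero a b
    · exact U0_open hA
  exact hU.mono hle

end Topo
end Poly

/-- For an infinite cardinal λ, `τ_mi` is the coarsest inverse semigroup topology on the
λ-polycyclic monoid `P_λ`: every Hausdorff topology `t` making `P_λ` a topological inverse
semigroup contains `τ_mi` (every `τ_mi`-open set is `t`-open). In particular `τ_mi` is a
minimal inverse semigroup topology: any such `t` coarser than `τ_mi` equals `τ_mi`. -/
theorem statement_15 (ι : Type u) [Infinite ι] :
    (∀ t : TopologicalSpace (PolyMon ι),
      @T2Space (PolyMon ι) t → @ContinuousMul (PolyMon ι) t _ → @ContinuousInv (PolyMon ι) t _ →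
      ∀ U : Set (PolyMon ι), @IsOpen (PolyMon ι) (tauMi ι) U → @IsOpen (PolyMon ι) t U) ∧
    (∀ t : TopologicalSpace (PolyMon ι),
      @T2Space (PolyMon ι) t → @ContinuousMul (PolyMon ι) t _ → @ContinuousInv (PolyMon ι) t _ →
      (∀ U : Set (PolyMon ι), @IsOpen (PolyMon ι) t U → @IsOpen (PolyMon ι) (tauMi ι) U) →
      t = tauMi ι) := by
  have main : ∀ t : TopologicalSpace (PolyMon ι),
      @T2Space (PolyMon ι) t → @ContinuousMul (PolyMon ι) t _ → @ContinuousInv (PolyMon ι) t _ →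
      ∀ U : Set (PolyMon ι), @IsOpen (PolyMon ι) (tauMi ι) U → @IsOpen (PolyMon ι) t U := by
    intro t ht hm hi U hU
    haveI := ht; haveI := hm; haveI := hi
    exact Poly.coarsest_aux U hU
  refine ⟨main, ?_⟩
  intro t ht hm hi hco
  refine le_antisymm ?_ ?_
  · exact isOpen_implies_isOpen_iff.mp (main t ht hm hi)
  · exact isOpen_implies_isOpen_iff.mp hco
end

section
/- For any cardinal λ ≥ 2, the set E(P_λ) = {0} ∪ {a⁻¹a : a ∈ M_λ} of idempotents of the λ-polycyclic monoid P_λ is a compact subset of (P_λ, τ_mi). -/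
universe u v

lemma U0_antitone {ι : Type u} {A B : Set (FreeMonoid ι)} (h : A ⊆ B) : U0 B ⊆ U0 A := by
  rintro x (rfl | ⟨a, b, ha, hb, rfl⟩)
  · exact Or.inl rfl
  · exact Or.inr ⟨a, b, fun hx => ha (h hx), fun hx => hb (h hx), rfl⟩

lemma zero_mem_U0 {ι : Type u} (A : Set (FreeMonoid ι)) : (0 : PolyMon ι) ∈ U0 A := Or.inl rfl

lemma mem_nhds_zero {ι : Type u} (V : Set (PolyMon ι)) :
    V ∈ @nhds _ (tauMi ι) 0 ↔ ∃ A : Set (FreeMonoid ι), A.Finite ∧ U0 A ⊆ V := by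
  rw [tauMi, TopologicalSpace.nhds_generateFrom]
  have hset : {s : Set (PolyMon ι) | (0 : PolyMon ι) ∈ s ∧
      s ∈ ({s | ∃ x : PolyMon ι, x ≠ 0 ∧ s = {x}} ∪
        {s | ∃ A : Set (FreeMonoid ι), A.Finite ∧ s = U0 A})}
      = {s | ∃ A : Set (FreeMonoid ι), A.Finite ∧ s = U0 A} := by
    ext s
    constructor
    · rintro ⟨h0, (⟨x, hx, rfl⟩ | hs)⟩
      · exact absurd h0.symm hx
      · exact hs
    · rintro ⟨A, hA, rfl⟩
      exact ⟨zero_mem_U0 A, Or.inr ⟨A, hA, rfl⟩⟩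
  rw [hset]
  rw [Filter.mem_biInf_of_directed]
  · constructor
    · rintro ⟨s, ⟨A, hA, rfl⟩, hV⟩
      exact ⟨A, hA, hV⟩
    · rintro ⟨A, hA, hV⟩
      exact ⟨U0 A, ⟨A, hA, rfl⟩, hV⟩
  · rintro s ⟨A, hA, rfl⟩ t ⟨B, hB, rfl⟩
    refine ⟨U0 (A ∪ B), ⟨A ∪ B, hA.union hB, rfl⟩, ?_, ?_⟩
    · exact Filter.principal_mono.2 (U0_antitone Set.subset_union_left)
    · exact Filter.principal_mono.2 (U0_antitone Set.subset_union_right)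
  · exact ⟨U0 ∅, ⟨∅, Set.finite_empty, rfl⟩⟩

/-- For λ ≥ 2, the set `E(P_λ) = {0} ∪ {a⁻¹a : a ∈ M_λ}` of idempotents of the
λ-polycyclic monoid is a compact subset of `(P_λ, τ_mi)`. -/
theorem statement_16 (ι : Type u) [Nontrivial ι] :
    @IsCompact (PolyMon ι) (tauMi ι)
      {x : PolyMon ι | x = 0 ∨ ∃ a : FreeMonoid ι, x = polyEl a a} := by
  letI : TopologicalSpace (PolyMon ι) := tauMi ι
  set E : Set (PolyMon ι) := {x : PolyMon ι | x = 0 ∨ ∃ a : FreeMonoid ι, x = polyEl a a}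
  rw [isCompact_iff_ultrafilter_le_nhds]
  intro f hf
  by_cases hsing : ∃ x : PolyMon ι, {x} ∈ f
  · obtain ⟨x, hx⟩ := hsing
    refine ⟨x, ?_, ?_⟩
    · -- x ∈ E since {x} ∩ E ∈ f and f is proper
      have hE : E ∈ f := hf (Filter.mem_principal_self E)
      have := f.toFilter.inter_mem hx hE
      obtain ⟨y, hy1, hy2⟩ := Filter.nonempty_of_mem this
      rwa [Set.mem_singleton_iff.1 hy1] at hy2
    · calc (f : Filter (PolyMon ι)) ≤ Filter.principal {x} := Filter.le_principal_iff.2 hx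
        _ = pure x := Filter.principal_singleton x
        _ ≤ @nhds _ (tauMi ι) x := pure_le_nhds x
  · push_neg at hsing
    refine ⟨0, Or.inl rfl, fun V hV => ?_⟩
    obtain ⟨A, hA, hAV⟩ := (mem_nhds_zero V).1 hV
    have hE : E ∈ f := hf (Filter.mem_principal_self E)
    have hS : (⋂ a ∈ A, ({polyEl a a}ᶜ : Set (PolyMon ι))) ∈ (f : Filter (PolyMon ι)) :=
      (Filter.biInter_mem hA).2 fun a _ =>
        Ultrafilter.compl_mem_iff_notMem.2 (hsing (polyEl a a))
    have : E ∩ (⋂ a ∈ A, ({polyEl a a}ᶜ : Set (PolyMon ι))) ⊆ V := by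
      rintro x ⟨(rfl | ⟨a, rfl⟩), hx2⟩
      · exact hAV (zero_mem_U0 A)
      · refine hAV (Or.inr ⟨a, a, ?_, ?_, rfl⟩) <;>
        · intro haA
          have hmem : polyEl a a ∈ ({polyEl a a}ᶜ : Set (PolyMon ι)) := by
            simp only [Set.mem_iInter] at hx2
            exact hx2 a haA
          exact hmem rfl
    exact f.toFilter.mem_of_superset (f.toFilter.inter_mem hE hS) this
end
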